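/- Let H be a norm on ℝ^N with dual norm H₀, both C^1 away from the origin with strictly convex unit balls. Then the map ξ ↦ H(ξ)∇H(ξ) is invertible on ℝ^N \ {0} with inverse x ↦ H₀(x)∇H₀(x). -/

import Mathlib

open InnerProductSpace

section Aux

variable {E : Type*} [NormedAddCommGroup E] [InnerProductSpace ℝ E] [CompleteSpace E]

set_option linter.unusedSectionVars false

/-- Euler identity for positively 1-homogeneous functions. -/
theorem my_euler {f : E → ℝ} (hom : ∀ s : ℝ, 0 < s → ∀ x, f (s • x) = s * f x)
    {ξ : E} (hd : DifferentiableAt ℝ f ξ) : fderiv ℝ f ξ ξ = f ξ := by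
  have hcurve : HasDerivAt (fun t : ℝ => t • ξ) ξ 1 := by
    simpa using (hasDerivAt_id (1:ℝ)).smul_const ξ
  have h1 : HasDerivAt (fun t : ℝ => f (t • ξ)) (fderiv ℝ f ξ ξ) 1 := by
    have h := HasFDerivAt.comp_hasDerivAt (1:ℝ)
      (by rw [one_smul]; exact hd.hasFDerivAt) hcurve
    simpa [Function.comp_def] using h
  have h2 : HasDerivAt (fun t : ℝ => t * f ξ) (f ξ) 1 := by
    simpa using (hasDerivAt_id (1:ℝ)).mul_const (f ξ)
  have heq : (fun t : ℝ => t * f ξ) =ᶠ[nhds (1:ℝ)] fun t => f (t • ξ) := by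
    filter_upwards [eventually_gt_nhds (by norm_num : (0:ℝ) < 1)] with t ht
    exact (hom t ht ξ).symm
  exact (h1.congr_of_eventuallyEq heq).unique h2

/-- Subgradient inequality for a convex function differentiable at a point. -/
theorem my_subgrad {f : E → ℝ} (hconv : ConvexOn ℝ Set.univ f)
    {ξ : E} (hd : DifferentiableAt ℝ f ξ) (η : E) :
    f ξ + fderiv ℝ f ξ (η - ξ) ≤ f η := by
  have hg : ConvexOn ℝ Set.univ (f ∘ (AffineMap.lineMap ξ η : ℝ →ᵃ[ℝ] E)) := by
    simpa using hconv.comp_affineMap (AffineMap.lineMap ξ η : ℝ →ᵃ[ℝ] E)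
  have hc1 : HasDerivAt (fun t : ℝ => (1 - t) • ξ) (-ξ) 0 := by
    have := ((hasDerivAt_const (0:ℝ) (1:ℝ)).sub (hasDerivAt_id (0:ℝ))).smul_const ξ
    simpa using this
  have hc2 : HasDerivAt (fun t : ℝ => t • η) η 0 := by
    simpa using (hasDerivAt_id (0:ℝ)).smul_const η
  have hcurve : HasDerivAt (fun t : ℝ => (1 - t) • ξ + t • η) (η - ξ) 0 := by
    simpa [neg_add_eq_sub, Pi.add_def] using hc1.add hc2
  have hcd : HasDerivAt (f ∘ (AffineMap.lineMap ξ η : ℝ →ᵃ[ℝ] E))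
      (fderiv ℝ f ξ (η - ξ)) 0 := by
    have h := HasFDerivAt.comp_hasDerivAt (0:ℝ)
      (l := f) (l' := fderiv ℝ f ξ) (f := fun t : ℝ => (1 - t) • ξ + t • η)
      (by norm_num; exact hd.hasFDerivAt) hcurve
    have hfn : (f ∘ (AffineMap.lineMap ξ η : ℝ →ᵃ[ℝ] E))
        = fun t : ℝ => f ((1 - t) • ξ + t • η) := by
      funext t; simp [AffineMap.lineMap_apply_module]
    rw [hfn]; exact h
  have hsl := hg.le_slope_of_hasDerivAt (Set.mem_univ 0) (Set.mem_univ 1) one_pos hcd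
  rw [slope_def_field] at hsl
  simp only [Function.comp, AffineMap.lineMap_apply_module, one_smul, zero_smul, zero_add,
    add_zero, sub_self, sub_zero, div_one, sub_add_cancel] at hsl
  linarith

/-- The fderiv of a positively 1-homogeneous function is invariant under positive scaling. -/
theorem my_fderiv_homog {f : E → ℝ} (hom : ∀ s : ℝ, 0 < s → ∀ x, f (s • x) = s * f x)
    {t : ℝ} (ht : 0 < t) {ξ : E} (hd : DifferentiableAt ℝ f ξ) :
    fderiv ℝ f (t • ξ) = fderiv ℝ f ξ := by
  have hfun : f = fun y => t * f (t⁻¹ • y) := by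
    funext y
    rw [← hom t ht (t⁻¹ • y), smul_smul, mul_inv_cancel₀ ht.ne', one_smul]
  set ψ : E →L[ℝ] E := t⁻¹ • ContinuousLinearMap.id ℝ E with hψ
  have hψd : HasFDerivAt (fun y => ψ y) ψ (t • ξ) := ψ.hasFDerivAt
  have hpt : ψ (t • ξ) = ξ := by
    simp [hψ, smul_smul, mul_inv_cancel₀ ht.ne']
  have hcomp : HasFDerivAt (fun y => f (ψ y)) ((fderiv ℝ f ξ).comp ψ) (t • ξ) := by
    refine HasFDerivAt.comp _ ?_ hψd
    rw [hpt]; exact hd.hasFDerivAt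
  have hmul : HasFDerivAt (fun y => t * f (ψ y)) (t • ((fderiv ℝ f ξ).comp ψ)) (t • ξ) :=
    hcomp.const_mul t
  have hmap : t • ((fderiv ℝ f ξ).comp ψ) = fderiv ℝ f ξ := by
    ext v
    simp [hψ, smul_smul, mul_inv_cancel₀ ht.ne']
  rw [hmap] at hmul
  have h' : HasFDerivAt f (fderiv ℝ f ξ) (t • ξ) :=
    hmul.congr_of_eventuallyEq (Filter.Eventually.of_forall fun y => by
      simpa [hψ] using congrFun hfun y)
  exact h'.fderiv

/-- If `w` supports `f` at `p` and `f` is differentiable at `p`, then `gradient f p = w`. -/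
theorem my_grad_eq_of_support {f : E → ℝ} {p w : E} (hd : DifferentiableAt ℝ f p)
    (hge : ∀ y, (inner ℝ w y : ℝ) ≤ f y) (heq : (inner ℝ w p : ℝ) = f p) :
    gradient f p = w := by
  set L : E →L[ℝ] ℝ := toDual ℝ E w with hL
  have hmin : IsLocalMin (fun y => f y - L y) p := by
    apply Filter.Eventually.of_forall
    intro y
    simp only [hL, toDual_apply_apply, heq.symm]
    linarith [hge y]
  have hzero : fderiv ℝ (fun y => f y - L y) p = 0 := hmin.fderiv_eq_zero
  have hsub : fderiv ℝ (fun y => f y - L y) p = fderiv ℝ f p - L := by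
    rw [fderiv_fun_sub hd L.differentiableAt, L.fderiv]
  have hf : fderiv ℝ f p = L := by
    have h := hsub.symm.trans hzero
    rwa [sub_eq_zero] at h
  rw [gradient, hf, hL, LinearIsometryEquiv.symm_apply_apply]

/-- Inner product with the gradient computes the Fréchet derivative. -/
theorem my_inner_grad (f : E → ℝ) (ξ v : E) :
    (inner ℝ (gradient f ξ) v : ℝ) = fderiv ℝ f ξ v := by
  rw [gradient, toDual_symm_apply]

end Aux

/-- For a norm `H` with dual norm `H₀`, both `C¹` away from the origin with
strictly convex unit balls, the map `ξ ↦ H(ξ)∇H(ξ)` (extended by `0` at the origin) is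
invertible with inverse `x ↦ H₀(x)∇H₀(x)`. -/
theorem H_gradH_invertible
    (N : ℕ) (hN : 0 < N) (H H₀ : EuclideanSpace ℝ (Fin N) → ℝ)
    (hconv : ConvexOn ℝ Set.univ H)
    (hpos : ∀ ξ, 0 ≤ H ξ)
    (hdef : ∀ ξ, H ξ = 0 ↔ ξ = 0)
    (hhom : ∀ (t : ℝ) (ξ : EuclideanSpace ℝ (Fin N)), H (t • ξ) = |t| * H ξ)
    (hdiff : ∀ ξ : EuclideanSpace ℝ (Fin N), ξ ≠ 0 → DifferentiableAt ℝ H ξ)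
    (hstrict : StrictConvex ℝ {ξ : EuclideanSpace ℝ (Fin N) | H ξ < 1})
    (hdual : ∀ x, H₀ x
      = ⨆ ξ : {ξ : EuclideanSpace ℝ (Fin N) // ξ ≠ 0}, (inner ℝ x ξ.1 : ℝ) / H ξ.1)
    (hdiff₀ : ∀ x : EuclideanSpace ℝ (Fin N), x ≠ 0 → DifferentiableAt ℝ H₀ x)
    (hstrict₀ : StrictConvex ℝ {x : EuclideanSpace ℝ (Fin N) | H₀ x < 1})
    (F G : EuclideanSpace ℝ (Fin N) → EuclideanSpace ℝ (Fin N))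
    (hF : ∀ ξ, ξ ≠ 0 → F ξ = H ξ • gradient H ξ) (hF0 : F 0 = 0)
    (hG : ∀ x, x ≠ 0 → G x = H₀ x • gradient H₀ x) (hG0 : G 0 = 0) :
    Function.LeftInverse G F ∧ Function.RightInverse G F := by
  -- basic facts
  have homH : ∀ s : ℝ, 0 < s → ∀ x, H (s • x) = s * H x := fun s hs x => by
    rw [hhom, abs_of_pos hs]
  have H0 : H 0 = 0 := (hdef 0).mpr rfl
  have Hpos : ∀ ξ : EuclideanSpace ℝ (Fin N), ξ ≠ 0 → 0 < H ξ := fun ξ hξ =>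
    (hpos ξ).lt_of_ne fun h => hξ ((hdef ξ).mp h.symm)
  have euler' : ∀ ξ : EuclideanSpace ℝ (Fin N), ξ ≠ 0 →
      (inner ℝ (gradient H ξ) ξ : ℝ) = H ξ := fun ξ hξ => by
    rw [my_inner_grad]; exact my_euler homH (hdiff ξ hξ)
  have support : ∀ ξ : EuclideanSpace ℝ (Fin N), ξ ≠ 0 → ∀ η,
      (inner ℝ (gradient H ξ) η : ℝ) ≤ H η := by
    intro ξ hξ η
    have hsg := my_subgrad hconv (hdiff ξ hξ) η
    rw [map_sub] at hsg
    have he := my_euler homH (hdiff ξ hξ)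
    rw [my_inner_grad]
    linarith
  have gradne : ∀ ξ : EuclideanSpace ℝ (Fin N), ξ ≠ 0 → gradient H ξ ≠ 0 := by
    intro ξ hξ h
    have := euler' ξ hξ
    rw [h, inner_zero_left] at this
    exact absurd this.symm (Hpos ξ hξ).ne'
  -- a nonzero vector
  set e : EuclideanSpace ℝ (Fin N) := EuclideanSpace.single ⟨0, hN⟩ (1:ℝ) with he
  have hnorme : ‖e‖ = 1 := by simp [he, EuclideanSpace.norm_single]
  have hene : e ≠ 0 := by
    intro h; rw [h, norm_zero] at hnorme; norm_num at hnorme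
  haveI : Nonempty {ξ : EuclideanSpace ℝ (Fin N) // ξ ≠ 0} := ⟨⟨e, hene⟩⟩
  -- sphere compactness
  have hsc : IsCompact (Metric.sphere (0 : EuclideanSpace ℝ (Fin N)) 1) := isCompact_sphere 0 1
  have hsne : (Metric.sphere (0 : EuclideanSpace ℝ (Fin N)) 1).Nonempty :=
    ⟨e, by rwa [mem_sphere_zero_iff_norm]⟩
  have hsnz : ∀ ζ ∈ Metric.sphere (0 : EuclideanSpace ℝ (Fin N)) 1, ζ ≠ 0 := by
    intro ζ hζ
    rw [mem_sphere_zero_iff_norm] at hζ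
    intro h; rw [h, norm_zero] at hζ; norm_num at hζ
  have hHconts : ContinuousOn H (Metric.sphere (0 : EuclideanSpace ℝ (Fin N)) 1) :=
    fun ζ hζ => ((hdiff ζ (hsnz ζ hζ)).continuousAt).continuousWithinAt
  obtain ⟨ξm, hξm, hmin⟩ := hsc.exists_isMinOn hsne hHconts
  have hc : 0 < H ξm := Hpos ξm (hsnz ξm hξm)
  have hlow : ∀ ξ : EuclideanSpace ℝ (Fin N), H ξm * ‖ξ‖ ≤ H ξ := by
    intro ξ
    by_cases hξ : ξ = 0
    · simp [hξ, H0]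
    · have hn : (0:ℝ) < ‖ξ‖ := norm_pos_iff.mpr hξ
      have hmem : ‖ξ‖⁻¹ • ξ ∈ Metric.sphere (0 : EuclideanSpace ℝ (Fin N)) 1 := by
        rw [mem_sphere_zero_iff_norm, norm_smul, norm_inv, norm_norm,
          inv_mul_cancel₀ hn.ne']
      have h1 : H ξm ≤ H (‖ξ‖⁻¹ • ξ) := (isMinOn_iff.mp hmin) _ hmem
      have h2 : H ξ = ‖ξ‖ * H (‖ξ‖⁻¹ • ξ) := by
        rw [← homH ‖ξ‖ hn, smul_inv_smul₀ hn.ne']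
      rw [h2, mul_comm (H ξm)]
      exact mul_le_mul_of_nonneg_left h1 hn.le
  -- boundedness of the dual sup
  have hbdd : ∀ x : EuclideanSpace ℝ (Fin N), BddAbove (Set.range
      fun ξ : {ξ : EuclideanSpace ℝ (Fin N) // ξ ≠ 0} => (inner ℝ x ξ.1 : ℝ) / H ξ.1) := by
    intro x
    refine ⟨‖x‖ / H ξm, ?_⟩
    rintro _ ⟨⟨ξ, hξ⟩, rfl⟩
    have hn : (0:ℝ) < ‖ξ‖ := norm_pos_iff.mpr hξ
    have hp : 0 < H ξ := Hpos ξ hξ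
    calc (inner ℝ x ξ : ℝ) / H ξ ≤ ‖x‖ * ‖ξ‖ / (H ξm * ‖ξ‖) :=
        div_le_div₀ (by positivity) (real_inner_le_norm x ξ) (by positivity) (hlow ξ)
      _ = ‖x‖ / H ξm := mul_div_mul_right _ _ hn.ne'
  have hle : ∀ x ξ : EuclideanSpace ℝ (Fin N), ξ ≠ 0 →
      (inner ℝ x ξ : ℝ) / H ξ ≤ H₀ x := by
    intro x ξ hξ
    rw [hdual]
    exact le_ciSup (hbdd x) ⟨ξ, hξ⟩
  have hub : ∀ (x : EuclideanSpace ℝ (Fin N)) (M : ℝ),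
      (∀ ξ : EuclideanSpace ℝ (Fin N), ξ ≠ 0 → (inner ℝ x ξ : ℝ) / H ξ ≤ M) → H₀ x ≤ M := by
    intro x M h
    rw [hdual]
    exact ciSup_le fun ξ => h ξ.1 ξ.2
  have hH₀grad : ∀ ξ : EuclideanSpace ℝ (Fin N), ξ ≠ 0 → H₀ (gradient H ξ) = 1 := by
    intro ξ hξ
    refine le_antisymm (hub _ 1 fun η hη => ?_) ?_
    · exact (div_le_one (Hpos η hη)).mpr (support ξ hξ η)
    · have h := hle (gradient H ξ) ξ hξ
      rwa [euler' ξ hξ, div_self (Hpos ξ hξ).ne'] at h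
  have hH₀pos : ∀ x : EuclideanSpace ℝ (Fin N), x ≠ 0 → 0 < H₀ x := by
    intro x hx
    have h := hle x x hx
    have h2 : 0 < (inner ℝ x x : ℝ) / H x := by
      have : (inner ℝ x x : ℝ) = ‖x‖ ^ 2 := real_inner_self_eq_norm_sq x
      rw [this]
      exact div_pos (pow_pos (norm_pos_iff.mpr hx) 2) (Hpos x hx)
    linarith
  have homH₀le : ∀ s : ℝ, 0 < s → ∀ x, H₀ (s • x) ≤ s * H₀ x := by
    intro s hs x
    refine hub _ _ fun ξ hξ => ?_
    have : (inner ℝ (s • x) ξ : ℝ) / H ξ = s * ((inner ℝ x ξ : ℝ) / H ξ) := by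
      rw [real_inner_smul_left, mul_div_assoc]
    rw [this]
    exact mul_le_mul_of_nonneg_left (hle x ξ hξ) hs.le
  have homH₀ : ∀ s : ℝ, 0 < s → ∀ x, H₀ (s • x) = s * H₀ x := by
    intro s hs x
    refine le_antisymm (homH₀le s hs x) ?_
    have h2 := homH₀le s⁻¹ (inv_pos.mpr hs) (s • x)
    rw [inv_smul_smul₀ hs.ne'] at h2
    calc s * H₀ x ≤ s * (s⁻¹ * H₀ (s • x)) := mul_le_mul_of_nonneg_left h2 hs.le
      _ = H₀ (s • x) := by field_simp
  have gradgrad : ∀ ξ : EuclideanSpace ℝ (Fin N), ξ ≠ 0 →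
      gradient H₀ (gradient H ξ) = (H ξ)⁻¹ • ξ := by
    intro ξ hξ
    refine my_grad_eq_of_support (hdiff₀ _ (gradne ξ hξ)) ?_ ?_
    · intro y
      have h := hle y ξ hξ
      rw [real_inner_smul_left, real_inner_comm y ξ]
      rw [div_eq_inv_mul] at h
      exact h
    · rw [real_inner_smul_left, real_inner_comm, euler' ξ hξ,
        inv_mul_cancel₀ (Hpos ξ hξ).ne', hH₀grad ξ hξ]
  have gradH_homog : ∀ (t : ℝ), 0 < t → ∀ ξ : EuclideanSpace ℝ (Fin N), ξ ≠ 0 →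
      gradient H (t • ξ) = gradient H ξ := by
    intro t ht ξ hξ
    rw [gradient, gradient, my_fderiv_homog homH ht (hdiff ξ hξ)]
  have gradH₀_homog : ∀ (t : ℝ), 0 < t → ∀ x : EuclideanSpace ℝ (Fin N), x ≠ 0 →
      gradient H₀ (t • x) = gradient H₀ x := by
    intro t ht x hx
    rw [gradient, gradient, my_fderiv_homog homH₀ ht (hdiff₀ x hx)]
  -- left inverse
  have left : ∀ ξ, G (F ξ) = ξ := by
    intro ξ
    by_cases hξ : ξ = 0
    · rw [hξ, hF0, hG0]
    · have hp : 0 < H ξ := Hpos ξ hξ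
      have hx0 : gradient H ξ ≠ 0 := gradne ξ hξ
      have hFne : H ξ • gradient H ξ ≠ 0 := smul_ne_zero hp.ne' hx0
      rw [hF ξ hξ, hG _ hFne]
      have h1 : H₀ (H ξ • gradient H ξ) = H ξ := by
        rw [homH₀ _ hp, hH₀grad ξ hξ, mul_one]
      have h2 : gradient H₀ (H ξ • gradient H ξ) = (H ξ)⁻¹ • ξ := by
        rw [gradH₀_homog _ hp _ hx0]
        exact gradgrad ξ hξ
      rw [h1, h2, smul_smul, mul_inv_cancel₀ hp.ne', one_smul]
  -- right inverse
  have right : ∀ x, F (G x) = x := by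
    intro x
    by_cases hx : x = 0
    · rw [hx, hG0, hF0]
    · have hxp : 0 < H₀ x := hH₀pos x hx
      set g : EuclideanSpace ℝ (Fin N) → ℝ := fun ξ => (inner ℝ x ξ : ℝ) / H ξ with hgdef
      have hgcont : ContinuousOn g (Metric.sphere (0 : EuclideanSpace ℝ (Fin N)) 1) := by
        intro ζ hζ
        have hζne := hsnz ζ hζ
        exact (((toDual ℝ (EuclideanSpace ℝ (Fin N)) x).continuous.continuousAt).div
          ((hdiff ζ hζne).continuousAt) (Hpos ζ hζne).ne').continuousWithinAt
      obtain ⟨ξs, hξs, hmax⟩ := hsc.exists_isMaxOn hsne hgcont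
      have hξsne : ξs ≠ 0 := hsnz ξs hξs
      have hg_scale : ∀ (t : ℝ), 0 < t → ∀ ξ : EuclideanSpace ℝ (Fin N), ξ ≠ 0 →
          g (t • ξ) = g ξ := by
        intro t ht ξ hξ
        simp only [hgdef]
        rw [real_inner_smul_right, homH t ht, mul_div_mul_left _ _ ht.ne']
      have hsup : H₀ x = g ξs := by
        refine le_antisymm (hub x _ fun ξ hξ => ?_) (hle x ξs hξsne)
        have hn : (0:ℝ) < ‖ξ‖ := norm_pos_iff.mpr hξ
        have hmem : ‖ξ‖⁻¹ • ξ ∈ Metric.sphere (0 : EuclideanSpace ℝ (Fin N)) 1 := by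
          rw [mem_sphere_zero_iff_norm, norm_smul, norm_inv, norm_norm,
            inv_mul_cancel₀ hn.ne']
        have := (isMaxOn_iff.mp hmax) _ hmem
        rwa [hg_scale _ (inv_pos.mpr hn) ξ hξ] at this
      set ξ₀ : EuclideanSpace ℝ (Fin N) := (H ξs)⁻¹ • ξs with hξ₀def
      have hHs : 0 < H ξs := Hpos ξs hξsne
      have hξ₀ne : ξ₀ ≠ 0 := smul_ne_zero (inv_ne_zero hHs.ne') hξsne
      have hHξ₀ : H ξ₀ = 1 := by
        rw [hξ₀def, homH _ (inv_pos.mpr hHs), inv_mul_cancel₀ hHs.ne']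
      have hgξ₀ : g ξ₀ = H₀ x := by
        rw [hξ₀def, hg_scale _ (inv_pos.mpr hHs) ξs hξsne, ← hsup]
      have hinner : (inner ℝ x ξ₀ : ℝ) = H₀ x := by
        have : g ξ₀ = (inner ℝ x ξ₀ : ℝ) / H ξ₀ := rfl
        rw [this, hHξ₀, div_one] at hgξ₀
        exact hgξ₀
      set xh : EuclideanSpace ℝ (Fin N) := (H₀ x)⁻¹ • x with hxhdef
      have hgrad : gradient H ξ₀ = xh := by
        refine my_grad_eq_of_support (hdiff ξ₀ hξ₀ne) ?_ ?_
        · intro η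
          by_cases hη : η = 0
          · rw [hη, inner_zero_right, H0]
          · rw [hxhdef, real_inner_smul_left]
            have h := hle x η hη
            have h2 : (inner ℝ x η : ℝ) ≤ H₀ x * H η := (div_le_iff₀ (Hpos η hη)).mp h
            calc (H₀ x)⁻¹ * (inner ℝ x η : ℝ) ≤ (H₀ x)⁻¹ * (H₀ x * H η) :=
                mul_le_mul_of_nonneg_left h2 (inv_nonneg.mpr hxp.le)
              _ = H η := by field_simp
        · rw [hxhdef, real_inner_smul_left, hinner, inv_mul_cancel₀ hxp.ne', hHξ₀]
      set ζ : EuclideanSpace ℝ (Fin N) := H₀ x • ξ₀ with hζdef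
      have hζne : ζ ≠ 0 := smul_ne_zero hxp.ne' hξ₀ne
      have hFζ : F ζ = x := by
        rw [hF ζ hζne]
        have hH : H ζ = H₀ x := by
          rw [hζdef, homH _ hxp, hHξ₀, mul_one]
        have hgr : gradient H ζ = xh := by
          rw [hζdef, gradH_homog _ hxp _ hξ₀ne, hgrad]
        rw [hH, hgr, hxhdef, smul_smul, mul_inv_cancel₀ hxp.ne', one_smul]
      calc F (G x) = F (G (F ζ)) := by rw [hFζ]
        _ = F ζ := by rw [left ζ]
        _ = x := hFζ
  exact ⟨left, right⟩
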